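/- Let a(z) ∈ ℚ[[z]] be a formal power series in one variable, let m be a family of coefficients indexed by pairs λ1 ≥ λ2 ≥ 0, and let f = Σ m(λ1,λ2)·S_{(λ1,λ2)}(x,y) ∈ ℚ[[x,y]]. Then the product a(xy)·f(x,y) again has a Schur expansion a(xy)·f = Σ m̃(λ1,λ2)·S_{(λ1,λ2)}(x,y) for a (unique) family m̃, and its multiplicity series is M'(a(xy)·f)(t,v) = a(v)·M'(f)(t,v) in ℚ[[t,v]]. -/

import Mathlib

open Finset

abbrev Q2 : Type := MvPowerSeries (Fin 2) ℚ

noncomputable def Xv (i : Fin 2) : Q2 := MvPowerSeries.X i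

noncomputable def mon (i j : ℕ) : Fin 2 →₀ ℕ := Finsupp.single 0 i + Finsupp.single 1 j

noncomputable def c (i j : ℕ) (f : Q2) : ℚ := MvPowerSeries.coeff (mon i j) f

/-- Schur function S_{(l1,l2)}(x,y) for l1 ≥ l2. -/
noncomputable def schur (l1 l2 : ℕ) : Q2 :=
  (Xv 0 * Xv 1) ^ l2 * ∑ i ∈ range (l1 - l2 + 1), Xv 0 ^ i * Xv 1 ^ (l1 - l2 - i)

/-- f = Σ_{l1 ≥ l2 ≥ 0} m(l1,l2) · S_{(l1,l2)}, expressed coefficientwise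
(each coefficient receives only finitely many contributions, since `schur l1 l2`
is homogeneous of degree `l1 + l2`). -/
def IsSchurExpansion (m : ℕ → ℕ → ℚ) (f : Q2) : Prop :=
  ∀ i j : ℕ, c i j f =
    ∑ l1 ∈ range (i + j + 1), ∑ l2 ∈ range (l1 + 1), m l1 l2 * c i j (schur l1 l2)

/-- h(t,v) = Σ_{l1 ≥ l2 ≥ 0} m(l1,l2) t^{l1-l2} v^{l2}, the multiplicity series. -/
def IsMultSeries (m : ℕ → ℕ → ℚ) (h : Q2) : Prop :=
  ∀ p q : ℕ, c p q h = m (p + q) q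

/-- Substitution of φ0, φ1 (series with zero constant term) for the two variables of h:
the coefficient of a monomial e in h(φ0,φ1) only receives contributions from monomials
t^p v^q of h with p + q ≤ |e|. -/
noncomputable def subst2 (φ0 φ1 h : Q2) : Q2 :=
  fun e => ∑ p ∈ range (e 0 + e 1 + 1), ∑ q ∈ range (e 0 + e 1 + 1),
    MvPowerSeries.coeff (mon p q) h * MvPowerSeries.coeff e (φ0 ^ p * φ1 ^ q)

/-- Substitution of a series φ with zero constant term into a one-variable series a. -/
noncomputable def substP (φ : Q2) (a : PowerSeries ℚ) : Q2 :=
  fun e => ∑ k ∈ range (e 0 + e 1 + 1),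
    PowerSeries.coeff k a * MvPowerSeries.coeff e (φ ^ k)

/-! ### Auxiliary lemmas -/

lemma mon_apply0 (i j : ℕ) : mon i j 0 = i := by simp [mon]
lemma mon_apply1 (i j : ℕ) : mon i j 1 = j := by simp [mon]

lemma eq_mon (d : Fin 2 →₀ ℕ) : d = mon (d 0) (d 1) := by
  ext x; fin_cases x <;> simp [mon]

lemma mon_inj {p q i j : ℕ} : mon p q = mon i j ↔ p = i ∧ q = j := by
  constructor
  · intro h
    constructor
    · have := congrArg (fun d => d 0) h; simpa [mon_apply0] using this
    · have := congrArg (fun d => d 1) h; simpa [mon_apply1] using this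
  · rintro ⟨rfl, rfl⟩; rfl

lemma Xpow_mul_Xpow (p q : ℕ) :
    Xv 0 ^ p * Xv 1 ^ q = MvPowerSeries.monomial (mon p q) 1 := by
  rw [Xv, Xv, MvPowerSeries.X_pow_eq, MvPowerSeries.X_pow_eq,
    MvPowerSeries.monomial_mul_monomial, one_mul, mon]

lemma c_monomial (i j p q : ℕ) :
    c i j (MvPowerSeries.monomial (mon p q) 1) = if p = i ∧ q = j then 1 else 0 := by
  rw [c, MvPowerSeries.coeff_monomial]
  by_cases h : p = i ∧ q = j
  · rw [if_pos, if_pos h]; exact (mon_inj.2 ⟨h.1.symm, h.2.symm⟩)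
  · rw [if_neg, if_neg h]; intro hc; exact h ⟨(mon_inj.1 hc.symm).1, (mon_inj.1 hc.symm).2⟩

lemma coeff_mul' (g f : Q2) (i j : ℕ) :
    c i j (g * f) = ∑ p ∈ antidiagonal i, ∑ q ∈ antidiagonal j,
      c p.1 q.1 g * c p.2 q.2 f := by
  rw [c, MvPowerSeries.coeff_mul]
  rw [← Finset.sum_product']
  apply Finset.sum_nbij' (i := fun p => ((p.1 0, p.2 0), (p.1 1, p.2 1)))
    (j := fun x => (mon x.1.1 x.2.1, mon x.1.2 x.2.2))
  · intro p hp
    rw [Finset.HasAntidiagonal.mem_antidiagonal] at hp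
    simp only [Finset.mem_product, Finset.mem_antidiagonal]
    constructor
    · have := congrArg (fun d => d 0) hp; simpa [mon_apply0] using this
    · have := congrArg (fun d => d 1) hp; simpa [mon_apply1] using this
  · intro x hx
    simp only [Finset.mem_product, Finset.HasAntidiagonal.mem_antidiagonal] at hx
    rw [Finset.HasAntidiagonal.mem_antidiagonal]
    ext t; fin_cases t <;> simp [mon, hx.1, hx.2]
  · intro p hp
    simp only
    exact Prod.ext (eq_mon p.1).symm (eq_mon p.2).symm
  · intro x hx
    simp [mon_apply0, mon_apply1]
  · intro p hp
    simp only [c]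
    rw [← eq_mon p.1, ← eq_mon p.2]

lemma schur_eq (l1 l2 : ℕ) : schur l1 l2 =
    ∑ r ∈ range (l1 - l2 + 1),
      MvPowerSeries.monomial (mon (l2 + r) (l2 + (l1 - l2 - r))) 1 := by
  rw [schur, Finset.mul_sum]
  refine Finset.sum_congr rfl fun r _ => ?_
  rw [← Xpow_mul_Xpow (l2 + r) (l2 + (l1 - l2 - r)), pow_add, pow_add]
  rw [mul_pow]; ring

lemma c_schur (l1 l2 i j : ℕ) (h : l2 ≤ l1) :
    c i j (schur l1 l2) = if i + j = l1 + l2 ∧ l2 ≤ i ∧ l2 ≤ j then 1 else 0 := by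
  rw [schur_eq, c, map_sum]
  have hterm : ∀ r ∈ range (l1 - l2 + 1),
      (MvPowerSeries.coeff (mon i j))
          ((MvPowerSeries.monomial (mon (l2 + r) (l2 + (l1 - l2 - r)))) 1)
        = if r = i - l2 ∧ i + j = l1 + l2 ∧ l2 ≤ i ∧ l2 ≤ j then (1:ℚ) else 0 := by
    intro r hr
    rw [Finset.mem_range] at hr
    exact (c_monomial i j _ _).trans (if_congr (by omega) rfl rfl)
  rw [Finset.sum_congr rfl hterm]
  by_cases hc : i + j = l1 + l2 ∧ l2 ≤ i ∧ l2 ≤ j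
  · rw [if_pos hc]
    rw [Finset.sum_eq_single (i - l2)]
    · rw [if_pos ⟨rfl, hc⟩]
    · intro b _ hb; rw [if_neg]; tauto
    · intro hmem; exfalso; apply hmem; rw [Finset.mem_range]; omega
  · rw [if_neg hc]
    apply Finset.sum_eq_zero
    intro r _; rw [if_neg]; tauto

lemma double_sum_eq (m : ℕ → ℕ → ℚ) (i j : ℕ) :
    ∑ l1 ∈ range (i + j + 1), ∑ l2 ∈ range (l1 + 1), m l1 l2 * c i j (schur l1 l2)
      = ∑ l2 ∈ range (min i j + 1), m (i + j - l2) l2 := by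
  have hinner : ∀ l1 ∈ range (i + j + 1),
      ∑ l2 ∈ range (l1 + 1), m l1 l2 * c i j (schur l1 l2)
        = if max i j ≤ l1 then m l1 (i + j - l1) else 0 := by
    intro l1 hl1
    rw [Finset.mem_range] at hl1
    have h1 : ∀ l2 ∈ range (l1 + 1), m l1 l2 * c i j (schur l1 l2)
        = if l2 = i + j - l1 then (if max i j ≤ l1 then m l1 (i + j - l1) else 0) else 0 := by
      intro l2 hl2
      rw [Finset.mem_range] at hl2
      rw [c_schur l1 l2 i j (by omega)]
      split_ifs with h1 h2 h3 h4 h5 <;>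
        first
        | (exfalso; omega)
        | rw [mul_zero]
        | rw [h2, mul_one]
    rw [Finset.sum_congr rfl h1, Finset.sum_ite_eq' (range (l1 + 1)) (i + j - l1)]
    by_cases hm : i + j - l1 ∈ range (l1 + 1)
    · rw [if_pos hm]
    · rw [if_neg hm, if_neg]
      rw [Finset.mem_range] at hm; omega
  rw [Finset.sum_congr rfl hinner, Finset.sum_ite, Finset.sum_const_zero, add_zero]
  apply Finset.sum_nbij' (i := fun l1 => i + j - l1) (j := fun l2 => i + j - l2)
  · intro l1 hl1
    simp only [Finset.mem_filter, Finset.mem_range] at hl1 ⊢; omega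
  · intro l2 hl2
    simp only [Finset.mem_filter, Finset.mem_range] at hl2 ⊢; omega
  · intro l1 hl1
    simp only [Finset.mem_filter, Finset.mem_range] at hl1; omega
  · intro l2 hl2
    simp only [Finset.mem_range] at hl2; omega
  · intro l1 hl1
    simp only [Finset.mem_filter, Finset.mem_range] at hl1
    congr 1; omega

lemma isSchur_iff (m : ℕ → ℕ → ℚ) (f : Q2) :
    IsSchurExpansion m f ↔
      ∀ i j : ℕ, c i j f = ∑ l2 ∈ range (min i j + 1), m (i + j - l2) l2 := by
  unfold IsSchurExpansion
  constructor <;> intro H i j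
  · rw [H, double_sum_eq]
  · rw [double_sum_eq, H]

lemma c_substP (φ : Q2) (a : PowerSeries ℚ) (i j : ℕ) :
    c i j (substP φ a) = ∑ k ∈ range (i + j + 1),
      PowerSeries.coeff k a * c i j (φ ^ k) := by
  have h : c i j (substP φ a) = substP φ a (mon i j) := rfl
  rw [h, substP, mon_apply0, mon_apply1]
  rfl

lemma c_substP_xy (a : PowerSeries ℚ) (i j : ℕ) :
    c i j (substP (Xv 0 * Xv 1) a) = if i = j then PowerSeries.coeff i a else 0 := by
  rw [c_substP]
  have hterm : ∀ k ∈ range (i + j + 1),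
      PowerSeries.coeff k a * c i j ((Xv 0 * Xv 1) ^ k)
        = if k = i then (if i = j then PowerSeries.coeff i a else 0) else 0 := by
    intro k hk
    have h : (Xv 0 * Xv 1) ^ k = MvPowerSeries.monomial (mon k k) 1 := by
      rw [mul_pow, Xpow_mul_Xpow]
    rw [h, c_monomial]
    split_ifs with h1 h2 h3 h2 <;> first | (exfalso; omega) | rw [mul_zero] | rw [mul_one, h1.1]
  rw [Finset.sum_congr rfl hterm, Finset.sum_ite_eq' (range (i + j + 1)) i]
  rw [if_pos (by rw [Finset.mem_range]; omega)]

lemma c_substP_y (a : PowerSeries ℚ) (i j : ℕ) :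
    c i j (substP (Xv 1) a) = if i = 0 then PowerSeries.coeff j a else 0 := by
  rw [c_substP]
  have hterm : ∀ k ∈ range (i + j + 1),
      PowerSeries.coeff k a * c i j ((Xv 1) ^ k)
        = if k = j then (if i = 0 then PowerSeries.coeff j a else 0) else 0 := by
    intro k hk
    have h : (Xv 1) ^ k = MvPowerSeries.monomial (mon 0 k) 1 := by
      rw [← Xpow_mul_Xpow 0 k, pow_zero, one_mul]
    rw [h, c_monomial]
    split_ifs with h1 h2 h3 h2 <;>
      first | (exfalso; omega) | rw [mul_zero] | (rw [mul_one, h1.2])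
  rw [Finset.sum_congr rfl hterm, Finset.sum_ite_eq' (range (i + j + 1)) j]
  rw [if_pos (by rw [Finset.mem_range]; omega)]

lemma c_diag_mul (A : ℕ → ℚ) (g f : Q2)
    (hg : ∀ i j, c i j g = if i = j then A i else 0) (i j : ℕ) :
    c i j (g * f) = ∑ k ∈ range (min i j + 1), A k * c (i - k) (j - k) f := by
  rw [coeff_mul']
  rw [Finset.Nat.sum_antidiagonal_eq_sum_range_succ_mk]
  have h1 : ∀ k1 ∈ range (i + 1),
      ∑ q ∈ antidiagonal j, c k1 q.1 g * c (i - k1) q.2 f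
        = if k1 ∈ range (j + 1) then A k1 * c (i - k1) (j - k1) f else 0 := by
    intro k1 hk1
    rw [Finset.Nat.sum_antidiagonal_eq_sum_range_succ_mk]
    have h2 : ∀ k2 ∈ range (j + 1),
        c k1 k2 g * c (i - k1) (j - k2) f
          = if k2 = k1 then A k1 * c (i - k1) (j - k1) f else 0 := by
      intro k2 hk2
      by_cases h : k2 = k1
      · subst h; rw [hg, if_pos rfl, if_pos rfl]
      · rw [hg, if_neg (Ne.symm h), zero_mul, if_neg h]
    rw [Finset.sum_congr rfl h2, Finset.sum_ite_eq' (range (j + 1)) k1]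
  rw [Finset.sum_congr rfl h1, Finset.sum_ite_mem]
  have h : range (i + 1) ∩ range (j + 1) = range (min i j + 1) := by
    ext x; simp only [Finset.mem_inter, Finset.mem_range]; omega
  rw [h]

lemma triangle (M : ℕ) (F : ℕ → ℕ → ℚ) :
    ∑ k ∈ range (M + 1), ∑ r ∈ range (M - k + 1), F k r
      = ∑ l ∈ range (M + 1), ∑ k ∈ range (l + 1), F k (l - k) := by
  rw [Finset.sum_sigma', Finset.sum_sigma']
  apply Finset.sum_nbij' (i := fun p => ⟨p.1 + p.2, p.1⟩) (j := fun p => ⟨p.2, p.1 - p.2⟩)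
  · intro p hp
    simp only [Finset.mem_sigma, Finset.mem_range] at hp ⊢; omega
  · intro p hp
    simp only [Finset.mem_sigma, Finset.mem_range] at hp ⊢; omega
  · intro p hp
    simp only [Finset.mem_sigma, Finset.mem_range] at hp
    dsimp only
    refine Sigma.ext rfl ?_
    simp only [heq_eq_eq]; omega
  · intro p hp
    simp only [Finset.mem_sigma, Finset.mem_range] at hp
    dsimp only
    refine Sigma.ext (show p.2 + (p.1 - p.2) = p.1 by omega) ?_
    simp only [heq_eq_eq]
  · intro p hp
    simp only [Finset.mem_sigma, Finset.mem_range] at hp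
    simp only
    congr 1; omega

/-- M'(a(xy)·f)(t,v) = a(v)·M'(f)(t,v). -/
theorem multiplicity_series_of_product_with_series_in_xy
    (a : PowerSeries ℚ) (m : ℕ → ℕ → ℚ) (f h : Q2)
    (hf : IsSchurExpansion m f) (hh : IsMultSeries m h) :
    ∃ mt : ℕ → ℕ → ℚ,
      IsSchurExpansion mt (substP (Xv 0 * Xv 1) a * f) ∧
      (∀ m' : ℕ → ℕ → ℚ, IsSchurExpansion m' (substP (Xv 0 * Xv 1) a * f) →
        ∀ l1 l2 : ℕ, l2 ≤ l1 → m' l1 l2 = mt l1 l2) ∧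
      (∀ p q : ℕ, mt (p + q) q = c p q (substP (Xv 1) a * h)) := by
  set mt : ℕ → ℕ → ℚ := fun l1 l2 =>
    ∑ k ∈ range (l2 + 1), PowerSeries.coeff k a * m (l1 - k) (l2 - k) with hmt
  have hfs := (isSchur_iff m f).1 hf
  -- the key computation of coefficients of the product
  have hmain : IsSchurExpansion mt (substP (Xv 0 * Xv 1) a * f) := by
    rw [isSchur_iff]
    intro i j
    rw [c_diag_mul (fun k => PowerSeries.coeff k a) _ f (fun i j => c_substP_xy a i j) i j]
    have step1 : ∀ k ∈ range (min i j + 1),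
        PowerSeries.coeff k a * c (i - k) (j - k) f
          = ∑ r ∈ range (min i j - k + 1),
              PowerSeries.coeff k a * m (i + j - (k + r) - k) r := by
      intro k hk
      rw [Finset.mem_range] at hk
      rw [hfs (i - k) (j - k), Finset.mul_sum]
      have hrange : min (i - k) (j - k) = min i j - k := by omega
      rw [hrange]
      refine Finset.sum_congr rfl fun r hr => ?_
      rw [Finset.mem_range] at hr
      congr 2
      omega
    rw [Finset.sum_congr rfl step1,
      triangle (min i j) (fun k r => PowerSeries.coeff k a * m (i + j - (k + r) - k) r)]
    refine Finset.sum_congr rfl fun l hl => ?_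
    rw [Finset.mem_range] at hl
    show _ = ∑ k ∈ range (l + 1), (PowerSeries.coeff k) a * m (i + j - l - k) (l - k)
    refine Finset.sum_congr rfl fun k hk => ?_
    rw [Finset.mem_range] at hk
    congr 2 <;> omega
  refine ⟨mt, hmain, ?_, ?_⟩
  · -- uniqueness
    intro m' hm'
    have h1 := (isSchur_iff m' _).1 hm'
    have h2 := (isSchur_iff mt _).1 hmain
    intro l1 l2
    induction l2 using Nat.strong_induction_on generalizing l1 with
    | _ l2 ih =>
      intro hle
      have he : ∑ l2' ∈ range (min l1 l2 + 1), m' (l1 + l2 - l2') l2'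
          = ∑ l2' ∈ range (min l1 l2 + 1), mt (l1 + l2 - l2') l2' := by
        rw [← h1 l1 l2, ← h2 l1 l2]
      have hmin : min l1 l2 = l2 := by omega
      rw [hmin] at he
      rw [Finset.sum_range_succ, Finset.sum_range_succ] at he
      have hprev : ∀ l2' ∈ range l2,
          m' (l1 + l2 - l2') l2' = mt (l1 + l2 - l2') l2' := by
        intro l2' hl2'
        rw [Finset.mem_range] at hl2'
        exact ih l2' hl2' (l1 + l2 - l2') (by omega)
      rw [Finset.sum_congr rfl hprev] at he
      have : m' (l1 + l2 - l2) l2 = mt (l1 + l2 - l2) l2 := by linarith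
      simpa using this
  · -- multiplicity series identity
    intro p q
    rw [coeff_mul', Finset.Nat.sum_antidiagonal_eq_sum_range_succ_mk]
    have h1 : ∀ k1 ∈ range (p + 1),
        ∑ x ∈ antidiagonal q, c k1 x.1 (substP (Xv 1) a) * c (p - k1) x.2 h
          = if k1 = 0 then
              ∑ k2 ∈ range (q + 1), PowerSeries.coeff k2 a * m (p + q - k2) (q - k2)
            else 0 := by
      intro k1 hk1
      rw [Finset.Nat.sum_antidiagonal_eq_sum_range_succ_mk]
      by_cases hz : k1 = 0
      · subst hz
        rw [if_pos rfl]
        refine Finset.sum_congr rfl fun k2 hk2 => ?_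
        rw [Finset.mem_range] at hk2
        rw [c_substP_y, if_pos rfl, hh]
        congr 2
        omega
      · rw [if_neg hz]
        apply Finset.sum_eq_zero
        intro k2 _
        rw [c_substP_y, if_neg hz, zero_mul]
    rw [Finset.sum_congr rfl h1, Finset.sum_ite_eq' (range (p + 1)) 0,
      if_pos (by rw [Finset.mem_range]; omega)]
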